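/- Let r > 0 and let h : ℝ^d → ℂ be continuous. If there exist C > 0 and K > 0 such that |x^α h(x)| ≤ K·C^{|α|}(α!)^r for all x ∈ ℝ^d and all multi-indices α, then for every ε with 0 < ε < r(dC)^{−1/r} there exists K' > 0 such that |h(x)| ≤ K'·exp(−ε|x|^{1/r}) for all x ∈ ℝ^d. -/

import Mathlib

private lemma fact_aux_mbd (m : ℕ) (hm : 1 ≤ m) :
    Real.exp 1 * (m : ℝ) ^ (m + 1) ≤ ((m : ℝ) + 1) ^ (m + 1) := by
  have hm0 : (0:ℝ) < (m:ℝ) := by exact_mod_cast hm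
  have hp : (0:ℝ) < (m:ℝ) + 1 := by linarith
  have h1 := Real.add_one_le_exp (-(1/((m:ℝ)+1)))
  have h2 : (m:ℝ) * Real.exp (1/((m:ℝ)+1)) ≤ (m:ℝ)+1 := by
    have hmul : Real.exp (-(1/((m:ℝ)+1))) * Real.exp (1/((m:ℝ)+1)) = 1 := by
      rw [← Real.exp_add]; simp
    have he := Real.exp_pos (1/((m:ℝ)+1))
    have h1' : (m:ℝ) ≤ ((m:ℝ)+1) * Real.exp (-(1/((m:ℝ)+1))) := by
      have : -(1/((m:ℝ)+1)) + 1 = (m:ℝ)/((m:ℝ)+1) := by field_simp; ring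
      rw [this] at h1
      have := (div_le_iff₀ hp).mp h1
      linarith [this]
    calc (m:ℝ) * Real.exp (1/((m:ℝ)+1))
        ≤ (((m:ℝ)+1) * Real.exp (-(1/((m:ℝ)+1)))) * Real.exp (1/((m:ℝ)+1)) := by
          apply mul_le_mul_of_nonneg_right h1' he.le
      _ = (m:ℝ)+1 := by rw [mul_assoc, hmul, mul_one]
  have h3 := pow_le_pow_left₀ (by positivity) h2 (m+1)
  calc Real.exp 1 * (m:ℝ)^(m+1) = ((m:ℝ) * Real.exp (1/((m:ℝ)+1)))^(m+1) := by
        rw [mul_pow, ← Real.exp_nat_mul]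
        have : ((m:ℕ)+1 : ℝ) * (1/((m:ℝ)+1)) = 1 := by push_cast; field_simp
        rw [show ((m+1 : ℕ) : ℝ) * (1/((m:ℝ)+1)) = ((m:ℝ)+1) * (1/((m:ℝ)+1)) by push_cast; ring]
        rw [show ((m:ℝ)+1) * (1/((m:ℝ)+1)) = 1 by field_simp]
        ring
    _ ≤ ((m:ℝ)+1)^(m+1) := h3

private lemma fact_le_mbd (n : ℕ) (hn : 1 ≤ n) :
    (Nat.factorial n : ℝ) * Real.exp 1 ^ n ≤ Real.exp 1 * (n : ℝ) ^ (n + 1) := by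
  induction n with
  | zero => omega
  | succ m ih =>
    rcases Nat.lt_or_ge 1 (m+1) with h1 | h1
    · have hm : 1 ≤ m := by omega
      have ih' := ih hm
      have key := fact_aux_mbd m hm
      have he := Real.exp_pos 1
      have hm0 : (0:ℝ) ≤ (m:ℝ) := by positivity
      rw [Nat.factorial_succ]
      push_cast
      rw [pow_succ, pow_succ]
      push_cast at ih' key
      calc ((m:ℝ) + 1) * (Nat.factorial m : ℝ) * (Real.exp 1 ^ m * Real.exp 1)
          = (((m:ℝ) + 1) * Real.exp 1) * ((Nat.factorial m : ℝ) * Real.exp 1 ^ m) := by ring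
        _ ≤ (((m:ℝ) + 1) * Real.exp 1) * (Real.exp 1 * (m:ℝ) ^ (m + 1)) := by
            apply mul_le_mul_of_nonneg_left ih' (by positivity)
        _ = ((m:ℝ) + 1) * (Real.exp 1 * (Real.exp 1 * (m:ℝ) ^ (m + 1))) := by ring
        _ ≤ ((m:ℝ) + 1) * (Real.exp 1 * (((m:ℝ) + 1) ^ (m + 1))) := by
            apply mul_le_mul_of_nonneg_left _ (by positivity)
            exact mul_le_mul_of_nonneg_left key (Real.exp_pos 1).le
        _ = Real.exp 1 * (((m:ℝ) + 1) ^ (m + 1) * ((m:ℝ) + 1)) := by ring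
    · have hm0 : m = 0 := by omega
      subst hm0
      simp [Nat.factorial]



private lemma floor_fact_bound_mbd (u : ℝ) (hu : 1 ≤ u) :
    (Nat.factorial ⌊u⌋₊ : ℝ) ≤ Real.exp 2 * u * Real.exp (-u) * u ^ ⌊u⌋₊ := by
  set n := ⌊u⌋₊ with hn
  have hn1 : 1 ≤ n := Nat.le_floor (by exact_mod_cast hu)
  have hnu : (n : ℝ) ≤ u := Nat.floor_le (by linarith)
  have hun : u < (n : ℝ) + 1 := Nat.lt_floor_add_one u
  have hu0 : (0:ℝ) < u := by linarith
  have h1 := fact_le_mbd n hn1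
  -- n! ≤ e * n^(n+1) / e^n ≤ e * u^(n+1) * e^(-n) ≤ e * u^(n+1) * e^(1-u)
  have hpow : (n : ℝ) ^ (n+1) ≤ u ^ (n+1) := pow_le_pow_left₀ (by positivity) hnu _
  have hexp : Real.exp 1 ^ n = Real.exp n := by
    rw [← Real.exp_nat_mul]; simp
  have hen : Real.exp (u - 1) ≤ Real.exp n := by
    apply Real.exp_le_exp.mpr; linarith
  have hfac : (Nat.factorial n : ℝ) * Real.exp (u - 1) ≤ Real.exp 1 * u ^ (n+1) := by
    calc (Nat.factorial n : ℝ) * Real.exp (u - 1)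
        ≤ (Nat.factorial n : ℝ) * Real.exp n := by
          apply mul_le_mul_of_nonneg_left hen (by positivity)
      _ = (Nat.factorial n : ℝ) * Real.exp 1 ^ n := by rw [hexp]
      _ ≤ Real.exp 1 * (n : ℝ) ^ (n + 1) := h1
      _ ≤ Real.exp 1 * u ^ (n+1) := by
          apply mul_le_mul_of_nonneg_left hpow (Real.exp_pos 1).le
  have heq : Real.exp 2 * u * Real.exp (-u) * u ^ n = (Real.exp 1 * u ^ (n+1)) / Real.exp (u-1) := by
    rw [eq_div_iff (Real.exp_pos (u-1)).ne']
    rw [show u ^ (n+1) = u ^ n * u by ring]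
    rw [show Real.exp 2 * u * Real.exp (-u) * u ^ n * Real.exp (u-1)
        = (Real.exp 2 * Real.exp (-u) * Real.exp (u-1)) * (u * u ^ n) by ring]
    rw [← Real.exp_add, ← Real.exp_add]
    ring_nf
  rw [heq, le_div_iff₀ (Real.exp_pos _)]
  exact hfac


private lemma single_bound_mbd (d : ℕ) (r : ℝ)
    (h : EuclideanSpace ℝ (Fin d) → ℂ)
    (C K : ℝ)
    (hb : ∀ (x : EuclideanSpace ℝ (Fin d)) (α : Fin d → ℕ),
      |∏ j, x j ^ α j| * ‖h x‖ ≤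
        K * C ^ (∑ j, α j) * (∏ j, (Nat.factorial (α j) : ℝ)) ^ (r : ℝ))
    (x : EuclideanSpace ℝ (Fin d)) (hx : x ≠ 0) (n : ℕ) :
    ‖x‖ ^ n * ‖h x‖ ≤ K * ((d : ℝ) * C) ^ n * ((Nat.factorial n : ℝ)) ^ (r : ℝ) := by
  have hne : Nonempty (Fin d) := by
    by_contra hemp
    apply hx
    ext j
    exact absurd ⟨j⟩ hemp
  obtain ⟨j0, -, hj0⟩ := Finset.exists_max_image Finset.univ (fun j => |x j|)
    ⟨Classical.arbitrary (Fin d), Finset.mem_univ _⟩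
  have hd1 : 1 ≤ d := by
    rcases hne with ⟨j⟩; exact j.pos
  -- ‖x‖ ≤ d * |x j0|
  have hnorm : ‖x‖ ≤ (d : ℝ) * |x j0| := by
    rw [EuclideanSpace.norm_eq]
    have hsum : ∑ j, ‖x j‖ ^ 2 ≤ (d : ℝ) * |x j0| ^ 2 := by
      calc ∑ j, ‖x j‖ ^ 2 ≤ ∑ _j : Fin d, |x j0| ^ 2 := by
            apply Finset.sum_le_sum
            intro j _
            rw [Real.norm_eq_abs]
            exact pow_le_pow_left₀ (abs_nonneg _) (hj0 j (Finset.mem_univ j)) 2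
        _ = (d : ℝ) * |x j0| ^ 2 := by simp [mul_comm]
    calc Real.sqrt (∑ j, ‖x j‖ ^ 2) ≤ Real.sqrt ((d : ℝ) * |x j0| ^ 2) := Real.sqrt_le_sqrt hsum
      _ = Real.sqrt d * |x j0| := by
          rw [Real.sqrt_mul (by positivity), Real.sqrt_sq_eq_abs, abs_abs]
      _ ≤ (d : ℝ) * |x j0| := by
          apply mul_le_mul_of_nonneg_right _ (abs_nonneg _)
          have hd1' : (1:ℝ) ≤ (d:ℝ) := by exact_mod_cast hd1
          calc Real.sqrt d ≤ Real.sqrt ((d:ℝ)^2) := Real.sqrt_le_sqrt (by nlinarith)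
            _ = (d:ℝ) := Real.sqrt_sq (by positivity)
  set α : Fin d → ℕ := fun j => if j = j0 then n else 0 with hα
  have hprod : ∏ j, x j ^ α j = x j0 ^ n := by
    rw [Finset.prod_eq_single j0]
    · simp [hα]
    · intro j _ hj; simp [hα, hj]
    · intro hj; exact absurd (Finset.mem_univ j0) hj
  have hsumα : ∑ j, α j = n := by
    rw [Finset.sum_eq_single j0]
    · simp [hα]
    · intro j _ hj; simp [hα, hj]
    · intro hj; exact absurd (Finset.mem_univ j0) hj
  have hfacα : ∏ j, ((Nat.factorial (α j)) : ℝ) = (Nat.factorial n : ℝ) := by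
    rw [Finset.prod_eq_single j0]
    · simp [hα]
    · intro j _ hj; simp [hα, hj, Nat.factorial]
    · intro hj; exact absurd (Finset.mem_univ j0) hj
  have hb' := hb x α
  rw [hprod, hsumα, hfacα] at hb'
  rw [abs_pow] at hb'
  calc ‖x‖ ^ n * ‖h x‖ ≤ ((d : ℝ) * |x j0|) ^ n * ‖h x‖ := by
        apply mul_le_mul_of_nonneg_right _ (norm_nonneg _)
        exact pow_le_pow_left₀ (norm_nonneg _) hnorm n
    _ = (d : ℝ) ^ n * (|x j0| ^ n * ‖h x‖) := by ring
    _ ≤ (d : ℝ) ^ n * (K * C ^ n * (Nat.factorial n : ℝ) ^ (r : ℝ)) := by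
        apply mul_le_mul_of_nonneg_left hb' (by positivity)
    _ = K * ((d : ℝ) * C) ^ n * ((Nat.factorial n : ℝ)) ^ (r : ℝ) := by
        rw [mul_pow]; ring

/-- If a continuous `h : ℝ^d → ℂ` satisfies the moment bounds
`|x^α h(x)| ≤ K C^{|α|} (α!)^r`, then for every `0 < ε < r (dC)^{-1/r}` there is `K'` with
`|h(x)| ≤ K' exp(-ε |x|^{1/r})`. -/
theorem moment_bounds_imply_decay (d : ℕ) (r : ℝ) (hr : 0 < r)
    (h : EuclideanSpace ℝ (Fin d) → ℂ) (hc : Continuous h)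
    (C K : ℝ) (hC : 0 < C) (hK : 0 < K)
    (hb : ∀ (x : EuclideanSpace ℝ (Fin d)) (α : Fin d → ℕ),
      |∏ j, x j ^ α j| * ‖h x‖ ≤
        K * C ^ (∑ j, α j) * (∏ j, (Nat.factorial (α j) : ℝ)) ^ (r : ℝ)) :
    ∀ ε : ℝ, 0 < ε → ε < r * ((d : ℝ) * C) ^ (-(1 / r)) →
      ∃ K' > 0, ∀ x : EuclideanSpace ℝ (Fin d),
        ‖h x‖ ≤ K' * Real.exp (-ε * ‖x‖ ^ (1 / r)) := by
  intro ε hε hε2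
  -- d must be positive
  have hd1 : 0 < d := by
    by_contra hd
    have hd0 : d = 0 := by omega
    subst hd0
    rw [show ((0:ℕ) : ℝ) * C = 0 by norm_num,
      Real.zero_rpow (neg_ne_zero.mpr (by positivity) : -(1/r) ≠ 0)] at hε2
    simp at hε2
    linarith
  set D : ℝ := (d : ℝ) * C with hDdef
  have hD : 0 < D := by positivity
  set A : ℝ := D ^ ((1:ℝ)/r) with hAdef
  have hA : 0 < A := Real.rpow_pos_of_pos hD _
  have hδ : 0 < r - ε * A := by
    have : ε * A < r := by
      calc ε * A < (r * D ^ (-(1/r))) * A := by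
            apply mul_lt_mul_of_pos_right hε2 hA
        _ = r * (D ^ (-(1/r)) * D ^ ((1:ℝ)/r)) := by rw [hAdef]; ring
        _ = r := by
            rw [← Real.rpow_add hD]
            norm_num
    linarith
  set δ : ℝ := r - ε * A with hδdef
  set c : ℝ := r / δ with hcdef
  have hc : 0 < c := by positivity
  set M : ℝ := Real.exp (r * Real.log c - r) with hMdef
  have hM : 0 < M := Real.exp_pos _
  refine ⟨K * Real.exp (ε * A) + K * Real.exp (2 * r) * M, by positivity, ?_⟩
  intro x
  set t : ℝ := ‖x‖ with htdef
  have ht0 : 0 ≤ t := norm_nonneg x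
  have hexp0 : 0 < Real.exp (-ε * t ^ ((1:ℝ)/r)) := Real.exp_pos _
  by_cases hcase : t ≤ D
  · -- small norm: use ‖h x‖ ≤ K
    have hhK : ‖h x‖ ≤ K := by
      have := hb x (fun _ => 0)
      simpa using this
    have h1 : t ^ ((1:ℝ)/r) ≤ A := by
      rw [hAdef]
      exact Real.rpow_le_rpow ht0 hcase (by positivity)
    have h2 : Real.exp (-(ε * A)) ≤ Real.exp (-ε * t ^ ((1:ℝ)/r)) := by
      apply Real.exp_le_exp.mpr
      nlinarith [h1, hε]
    calc ‖h x‖ ≤ K := hhK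
      _ = (K * Real.exp (ε * A)) * Real.exp (-(ε * A)) := by
          rw [mul_assoc, ← Real.exp_add]; simp
      _ ≤ (K * Real.exp (ε * A)) * Real.exp (-ε * t ^ ((1:ℝ)/r)) := by
          apply mul_le_mul_of_nonneg_left h2 (by positivity)
      _ ≤ (K * Real.exp (ε * A) + K * Real.exp (2 * r) * M) * Real.exp (-ε * t ^ ((1:ℝ)/r)) := by
          apply mul_le_mul_of_nonneg_right _ hexp0.le
          have : 0 < K * Real.exp (2 * r) * M := by positivity
          linarith
  · -- large norm
    push_neg at hcase
    have ht0' : 0 < t := lt_trans hD hcase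
    have hx0 : x ≠ 0 := by
      intro hx
      rw [htdef, hx] at ht0'
      simp at ht0'
    set u : ℝ := (t / D) ^ ((1:ℝ)/r) with hudef
    have htD1 : 1 ≤ t / D := (one_le_div hD).mpr hcase.le
    have hu1 : 1 ≤ u := by
      rw [hudef]
      calc (1:ℝ) = 1 ^ ((1:ℝ)/r) := (Real.one_rpow _).symm
        _ ≤ (t / D) ^ ((1:ℝ)/r) := Real.rpow_le_rpow (by norm_num) htD1 (by positivity)
    have hu0 : 0 < u := by linarith
    set n : ℕ := ⌊u⌋₊ with hndef
    -- u ^ r = t / D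
    have hur : u ^ (r : ℝ) = t / D := by
      rw [hudef, ← Real.rpow_mul (by positivity)]
      rw [show (1:ℝ)/r * r = 1 by field_simp]
      exact Real.rpow_one _
    -- main moment bound
    have hmom := single_bound_mbd d r h C K hb x hx0 n
    -- divide by D^n
    have h5 : (u ^ n) ^ (r : ℝ) * ‖h x‖ ≤ K * (Nat.factorial n : ℝ) ^ (r : ℝ) := by
      have hun : (u ^ n) ^ (r : ℝ) = (t / D) ^ n := by
        rw [← Real.rpow_natCast u n, ← Real.rpow_mul hu0.le, mul_comm,
          Real.rpow_mul hu0.le, hur, Real.rpow_natCast]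
      rw [hun, div_pow, div_mul_eq_mul_div, div_le_iff₀ (pow_pos hD n)]
      calc t ^ n * ‖h x‖ ≤ K * D ^ n * (Nat.factorial n : ℝ) ^ (r : ℝ) := hmom
        _ = K * (Nat.factorial n : ℝ) ^ (r : ℝ) * D ^ n := by ring
    -- factorial bound
    have h6 : (Nat.factorial n : ℝ) ^ (r : ℝ) ≤
        (Real.exp 2 * u * Real.exp (-u)) ^ (r : ℝ) * (u ^ n) ^ (r : ℝ) := by
      rw [← Real.mul_rpow (by positivity) (by positivity)]
      apply Real.rpow_le_rpow (by positivity) (floor_fact_bound_mbd u hu1) (le_of_lt hr)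
    have h7 : ‖h x‖ ≤ K * (Real.exp 2 * u * Real.exp (-u)) ^ (r : ℝ) := by
      have hupos : (0:ℝ) < (u ^ n) ^ (r : ℝ) := Real.rpow_pos_of_pos (by positivity) _
      rw [← mul_le_mul_iff_right₀ hupos]
      calc (u ^ n) ^ (r : ℝ) * ‖h x‖ ≤ K * (Nat.factorial n : ℝ) ^ (r : ℝ) := h5
        _ ≤ K * ((Real.exp 2 * u * Real.exp (-u)) ^ (r : ℝ) * (u ^ n) ^ (r : ℝ)) := by
            apply mul_le_mul_of_nonneg_left h6 hK.le
        _ = (u ^ n) ^ (r : ℝ) * (K * (Real.exp 2 * u * Real.exp (-u)) ^ (r : ℝ)) := by ring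
    -- expand rpow of products of exponentials
    have h8 : (Real.exp 2 * u * Real.exp (-u)) ^ (r : ℝ)
        = Real.exp (2 * r) * u ^ (r : ℝ) * Real.exp (-u * r) := by
      rw [Real.mul_rpow (by positivity) (by positivity),
        Real.mul_rpow (by positivity) (by positivity)]
      rw [← Real.exp_mul, ← Real.exp_mul]
    -- u^r * exp(-δ u) ≤ M
    have h9 : u ^ (r : ℝ) * Real.exp (-(δ * u)) ≤ M := by
      have hlog : Real.log (u / c) ≤ u / c - 1 := Real.log_le_sub_one_of_pos (by positivity)
      have hlogu : Real.log u ≤ u / c - 1 + Real.log c := by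
        have : Real.log u = Real.log (u / c) + Real.log c := by
          rw [← Real.log_mul (by positivity) (by positivity)]
          congr 1
          field_simp
        rw [this]
        linarith
      have hrc : r / c = δ := by
        rw [hcdef]
        field_simp
      have hur2 : u ^ (r : ℝ) = Real.exp (Real.log u * r) := Real.rpow_def_of_pos hu0 _
      rw [hur2, ← Real.exp_add, hMdef]
      apply Real.exp_le_exp.mpr
      have h' : Real.log u * r ≤ (u / c - 1 + Real.log c) * r :=
        mul_le_mul_of_nonneg_right hlogu hr.le
      have hcu : u / c * r = δ * u := by
        rw [← hrc]; field_simp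
      have hexpand : (u / c - 1 + Real.log c) * r = δ * u - r + Real.log c * r := by
        rw [← hcu]; ring
      rw [hexpand] at h'
      linarith
    -- A * u = t^(1/r)
    have h10 : A * u = t ^ ((1:ℝ)/r) := by
      rw [hAdef, hudef, ← Real.mul_rpow hD.le (by positivity)]
      congr 1
      field_simp
    -- combine
    have h11 : Real.exp (-u * r) = Real.exp (-(δ * u)) * Real.exp (-ε * t ^ ((1:ℝ)/r)) := by
      rw [← Real.exp_add]
      congr 1
      rw [← h10, hδdef]
      ring
    calc ‖h x‖ ≤ K * (Real.exp 2 * u * Real.exp (-u)) ^ (r : ℝ) := h7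
      _ = K * Real.exp (2 * r) * (u ^ (r : ℝ) * Real.exp (-(δ * u)))
            * Real.exp (-ε * t ^ ((1:ℝ)/r)) := by
          rw [h8, h11]; ring
      _ ≤ K * Real.exp (2 * r) * M * Real.exp (-ε * t ^ ((1:ℝ)/r)) := by
          apply mul_le_mul_of_nonneg_right _ hexp0.le
          apply mul_le_mul_of_nonneg_left h9 (by positivity)
      _ ≤ (K * Real.exp (ε * A) + K * Real.exp (2 * r) * M)
            * Real.exp (-ε * t ^ ((1:ℝ)/r)) := by
          apply mul_le_mul_of_nonneg_right _ hexp0.le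
          have : 0 < K * Real.exp (ε * A) := by positivity
          linarith
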